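/- Suppose u_h, v_h, q_h ∈ V_h^k satisfy, for every cell I_j and every polynomial test function φ of degree at most k on I_j, the two auxiliary equations of the conservative Scheme C1 with central fluxes: (v_h, φ)_{I_j} − ⟨{q_h}, φ⟩_{I_j} + (q_h, φ′)_{I_j} = ⟨{u_h}, φ⟩_{I_j} − (u_h, φ′)_{I_j} and (q_h, φ)_{I_j} = ⟨{v_h}, φ⟩_{I_j} − (v_h, φ′)_{I_j}, with periodic trace identification. Then the energy identity ∫_a^b v_h² dx + ∫_a^b q_h² dx + ∫_a^b q_h u_h dx = 0 holds. -/

import Mathlib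

open Polynomial Set

noncomputable section

namespace FW

variable {N : ℕ}

/-- Minus trace `ω⁻` at interface `j+1/2` (right end of cell `j`). -/
def trM (x : Fin (N + 1) → ℝ) (ω : Fin N → Polynomial ℝ) (j : Fin N) : ℝ :=
  (ω j).eval (x j.succ)

/-- Plus trace `ω⁺` at interface `j+1/2` (left end of the next cell, cyclically). -/
def trP [NeZero N] (x : Fin (N + 1) → ℝ) (ω : Fin N → Polynomial ℝ) (j : Fin N) : ℝ :=
  (ω (j + 1)).eval (x (j + 1).castSucc)

/-- Average trace `{ω}`. -/
def trA [NeZero N] (x : Fin (N + 1) → ℝ) (ω : Fin N → Polynomial ℝ) (j : Fin N) : ℝ :=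
  (trP x ω j + trM x ω j) / 2

/-- Jump `[ω]`. -/
def jmp [NeZero N] (x : Fin (N + 1) → ℝ) (ω : Fin N → Polynomial ℝ) (j : Fin N) : ℝ :=
  trP x ω j - trM x ω j

/-- Cell L² pairing `(u, φ)_{I_j}` of a piecewise polynomial with a test polynomial. -/
def ipj (x : Fin (N + 1) → ℝ) (u : Fin N → Polynomial ℝ) (j : Fin N) (φ : Polynomial ℝ) : ℝ :=
  ∫ t in (x j.castSucc)..(x j.succ), (u j).eval t * φ.eval t

/-- Cell pairing `(f∘u, φ)_{I_j}`. -/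
def ipfj (x : Fin (N + 1) → ℝ) (f : ℝ → ℝ) (u : Fin N → Polynomial ℝ) (j : Fin N)
    (φ : Polynomial ℝ) : ℝ :=
  ∫ t in (x j.castSucc)..(x j.succ), f ((u j).eval t) * φ.eval t

/-- Boundary pairing `⟨g, φ⟩_{I_j}` for interface values `g`. -/
def bdj [NeZero N] (x : Fin (N + 1) → ℝ) (g : Fin N → ℝ) (j : Fin N) (φ : Polynomial ℝ) : ℝ :=
  g j * φ.eval (x j.succ) - g (j - 1) * φ.eval (x j.castSucc)

/-- Membership in the space `V_h^k` of piecewise polynomials of degree at most `k`. -/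
def memV (k : ℕ) (ω : Fin N → Polynomial ℝ) : Prop :=
  ∀ j, (ω j).degree ≤ (k : WithBot ℕ)

/-- `L⁻(ω, φ)`. -/
def Lm [NeZero N] (x : Fin (N + 1) → ℝ) (ω φ : Fin N → Polynomial ℝ) : ℝ :=
  ∑ j, (-(ipj x ω j (derivative (φ j))) + bdj x (trM x ω) j (φ j))

/-- `L⁺(ω, φ)`. -/
def Lp [NeZero N] (x : Fin (N + 1) → ℝ) (ω φ : Fin N → Polynomial ℝ) : ℝ :=
  ∑ j, (-(ipj x ω j (derivative (φ j))) + bdj x (trP x ω) j (φ j))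

/-- `L^c(ω, φ)`. -/
def Lc [NeZero N] (x : Fin (N + 1) → ℝ) (ω φ : Fin N → Polynomial ℝ) : ℝ :=
  ∑ j, (-(ipj x ω j (derivative (φ j))) + bdj x (trA x ω) j (φ j))

/-- Godunov numerical flux. -/
def godunov (f : ℝ → ℝ) (c d : ℝ) : ℝ :=
  if c < d then sInf (f '' Set.Icc c d) else sSup (f '' Set.Icc d c)

/-- Conservative numerical flux for `f(u) = u^p/p`, `F(u) = u^(p+1)/(p(p+1))`. -/
def consFlux (p : ℕ) (c d : ℝ) : ℝ :=
  if c = d then c ^ p / (p : ℝ)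
  else (d ^ (p + 1) / ((p : ℝ) * ((p : ℝ) + 1)) - c ^ (p + 1) / ((p : ℝ) * ((p : ℝ) + 1))) / (d - c)

/-- Dissipative (Godunov-flux) nonlinear form `N^d`. -/
def Nd [NeZero N] (x : Fin (N + 1) → ℝ) (f : ℝ → ℝ) (ω φ : Fin N → Polynomial ℝ) : ℝ :=
  ∑ j, (-(ipfj x f ω j (derivative (φ j)))
    + bdj x (fun i => godunov f (trM x ω i) (trP x ω i)) j (φ j))

/-- Conservative-flux nonlinear form `N^c`. -/
def Nc [NeZero N] (x : Fin (N + 1) → ℝ) (p : ℕ) (ω φ : Fin N → Polynomial ℝ) : ℝ :=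
  ∑ j, (-(ipfj x (fun w => w ^ p / (p : ℝ)) ω j (derivative (φ j)))
    + bdj x (fun i => consFlux p (trM x ω i) (trP x ω i)) j (φ j))

end FW

section Aux

open FW

lemma myFtc (p : Polynomial ℝ) (A B : ℝ) :
    ∫ t in A..B, (derivative p).eval t = p.eval B - p.eval A :=
  intervalIntegral.integral_eq_sub_of_hasDerivAt (fun t _ => p.hasDerivAt t)
    ((p.derivative.continuous_aeval).intervalIntegrable A B)

variable {N : ℕ} [NeZero N]

lemma myIbp (x : Fin (N + 1) → ℝ) (ω φ : Fin N → Polynomial ℝ) (j : Fin N) :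
    FW.ipj x ω j (derivative (φ j)) + FW.ipj x φ j (derivative (ω j))
      = (ω j * φ j).eval (x j.succ) - (ω j * φ j).eval (x j.castSucc) := by
  unfold FW.ipj
  rw [← intervalIntegral.integral_add
    (f := fun t => (ω j).eval t * (derivative (φ j)).eval t)
    (g := fun t => (φ j).eval t * (derivative (ω j)).eval t)
    (((ω j).continuous.mul (derivative (φ j)).continuous).intervalIntegrable _ _)
    (((φ j).continuous.mul (derivative (ω j)).continuous).intervalIntegrable _ _),
    ← myFtc (ω j * φ j)]
  apply intervalIntegral.integral_congr
  intro t _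
  simp [Polynomial.derivative_mul]
  ring

lemma myShift (g : Fin N → ℝ) : ∑ j : Fin N, g (j - 1) = ∑ j : Fin N, g j :=
  Equiv.sum_comp (Equiv.subRight (1 : Fin N)) g

lemma trP_pred (x : Fin (N + 1) → ℝ) (ω : Fin N → Polynomial ℝ) (j : Fin N) :
    FW.trP x ω (j - 1) = (ω j).eval (x j.castSucc) := by
  unfold FW.trP
  rw [sub_add_cancel]

/-- minus-side product expression -/
def Pw (x : Fin (N + 1) → ℝ) (ω φ : Fin N → Polynomial ℝ) (i : Fin N) : ℝ :=
  -(FW.trM x ω i * FW.trM x φ i) + FW.trA x ω i * FW.trM x φ i + FW.trA x φ i * FW.trM x ω i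

/-- plus-side product expression -/
def Qw (x : Fin (N + 1) → ℝ) (ω φ : Fin N → Polynomial ℝ) (i : Fin N) : ℝ :=
  -(FW.trP x ω i * FW.trP x φ i) + FW.trA x ω i * FW.trP x φ i + FW.trA x φ i * FW.trP x ω i

lemma myKey (x : Fin (N + 1) → ℝ) (ω φ : Fin N → Polynomial ℝ) :
    FW.Lc x ω φ + FW.Lc x φ ω = 0 := by
  unfold FW.Lc
  rw [← Finset.sum_add_distrib]
  have step : ∀ j : Fin N,
      -(FW.ipj x ω j (derivative (φ j))) + FW.bdj x (FW.trA x ω) j (φ j) +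
        (-(FW.ipj x φ j (derivative (ω j))) + FW.bdj x (FW.trA x φ) j (ω j))
      = Pw x ω φ j - Qw x ω φ (j - 1) := by
    intro j
    have h := myIbp x ω φ j
    rw [Polynomial.eval_mul, Polynomial.eval_mul] at h
    unfold FW.bdj
    have hω : (ω j).eval (x j.castSucc) = FW.trP x ω (j - 1) := (trP_pred x ω j).symm
    have hφ : (φ j).eval (x j.castSucc) = FW.trP x φ (j - 1) := (trP_pred x φ j).symm
    have hωs : (ω j).eval (x j.succ) = FW.trM x ω j := rfl
    have hφs : (φ j).eval (x j.succ) = FW.trM x φ j := rfl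
    rw [hω, hφ, hωs, hφs] at h ⊢
    simp only [Pw, Qw]
    linarith
  rw [Finset.sum_congr rfl (fun j _ => step j), Finset.sum_sub_distrib,
    myShift (Qw x ω φ), ← Finset.sum_sub_distrib]
  apply Finset.sum_eq_zero
  intro j _
  simp only [Pw, Qw, FW.trA]
  ring

end Aux

theorem stmt13 {N : ℕ} [NeZero N] (hN : 1 ≤ N) (a b : ℝ) (hab : a < b)
    (x : Fin (N + 1) → ℝ) (hx : StrictMono x) (hxa : x 0 = a) (hxb : x (Fin.last N) = b)
    (k : ℕ) (u v q : Fin N → Polynomial ℝ)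
    (hu : FW.memV k u) (hv : FW.memV k v) (hq : FW.memV k q)
    (heq2 : ∀ (j : Fin N), ∀ φ : Polynomial ℝ, φ.degree ≤ (k : WithBot ℕ) →
      FW.ipj x v j φ - FW.bdj x (FW.trA x q) j φ + FW.ipj x q j (Polynomial.derivative φ)
        = FW.bdj x (FW.trA x u) j φ - FW.ipj x u j (Polynomial.derivative φ))
    (heq3 : ∀ (j : Fin N), ∀ φ : Polynomial ℝ, φ.degree ≤ (k : WithBot ℕ) →
      FW.ipj x q j φ = FW.bdj x (FW.trA x v) j φ - FW.ipj x v j (Polynomial.derivative φ)) :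
    (∑ j : Fin N, FW.ipj x v j (v j)) + (∑ j : Fin N, FW.ipj x q j (q j))
      + (∑ j : Fin N, FW.ipj x q j (u j)) = 0 := by
  have e1 : ∑ j : Fin N, FW.ipj x v j (v j) = FW.Lc x q v + FW.Lc x u v := by
    unfold FW.Lc
    rw [← Finset.sum_add_distrib]
    apply Finset.sum_congr rfl
    intro j _
    have := heq2 j (v j) (hv j)
    linarith
  have e2 : ∑ j : Fin N, FW.ipj x q j (q j) = FW.Lc x v q := by
    unfold FW.Lc
    apply Finset.sum_congr rfl
    intro j _
    have := heq3 j (q j) (hq j)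
    linarith
  have e3 : ∑ j : Fin N, FW.ipj x q j (u j) = FW.Lc x v u := by
    unfold FW.Lc
    apply Finset.sum_congr rfl
    intro j _
    have := heq3 j (u j) (hu j)
    linarith
  have k1 := myKey x q v
  have k2 := myKey x u v
  rw [e1, e2, e3]
  linarith
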